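/- For every D ≥ 1, the ratio v_D / a_D of the volume of the D-dimensional unit ball to the surface volume of the D-dimensional unit sphere (of intrinsic dimension D, a submanifold of R^{D+1}) is strictly less than 1/√(π(2D+1)). -/

import Mathlib

open MeasureTheory intervalIntegral Real Set

noncomputable def BI (u : ℝ) : ℝ := ∫ x in (0:ℝ)..1, x ^ (u-1) * (1-x) ^ (-(1/2):ℝ)

lemma integrand_eq (u : ℝ) {x : ℝ} (hx : 0 ≤ x) (hx1 : x ≤ 1) :
    (x:ℂ) ^ ((u:ℂ)-1) * ((1:ℂ)-x) ^ ((1/2:ℂ)-1)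
      = ((x ^ (u-1) * (1-x) ^ (-(1/2):ℝ) : ℝ) : ℂ) := by
  have h1 : ((x ^ (u-1) : ℝ) : ℂ) = (x:ℂ) ^ ((u:ℂ)-1) := by
    rw [Complex.ofReal_cpow hx]; push_cast; ring_nf
  have h2 : (((1-x) ^ (-(1/2):ℝ) : ℝ) : ℂ) = ((1:ℂ)-x) ^ ((1/2:ℂ)-1) := by
    rw [Complex.ofReal_cpow (by linarith : (0:ℝ) ≤ 1 - x)]; push_cast; norm_num
  rw [Complex.ofReal_mul, h1, h2]

lemma BI_integrable {u : ℝ} (hu : 0 < u) :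
    IntervalIntegrable (fun x => x ^ (u-1) * (1-x) ^ (-(1/2):ℝ)) volume 0 1 := by
  have h := Complex.betaIntegral_convergent (u := (u:ℂ)) (v := (1/2:ℂ)) (by simpa) (by norm_num)
  have h2 := h.1
  rw [intervalIntegrable_iff_integrableOn_Ioc_of_le (by norm_num)]
  have : IntegrableOn (fun x : ℝ => ((x:ℂ) ^ ((u:ℂ)-1) * ((1:ℂ)-x) ^ ((1/2:ℂ)-1)).re) (Ioc 0 1) volume := by
    exact h2.re
  refine this.congr_fun (fun x hx => ?_) measurableSet_Ioc
  beta_reduce; rw [integrand_eq u hx.1.le hx.2, Complex.ofReal_re]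

lemma BI_eq {u : ℝ} (hu : 0 < u) :
    Real.Gamma u * Real.sqrt π = Real.Gamma (u + 1/2) * BI u := by
  have h := Complex.Gamma_mul_Gamma_eq_betaIntegral (s := (u:ℂ)) (t := (1/2:ℂ)) (by simpa) (by norm_num)
  have hb : Complex.betaIntegral (u:ℂ) (1/2:ℂ) = ((BI u : ℝ) : ℂ) := by
    rw [Complex.betaIntegral, BI, ← intervalIntegral.integral_ofReal]
    refine intervalIntegral.integral_congr (fun x hx => ?_)
    rw [uIcc_of_le (by norm_num)] at hx
    exact integrand_eq u hx.1 hx.2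
  rw [hb] at h
  have : ((Real.Gamma u * Real.Gamma (1/2) : ℝ) : ℂ) = ((Real.Gamma (u + 1/2) * BI u : ℝ) : ℂ) := by
    push_cast [← Complex.Gamma_ofReal]
    convert h using 3 <;> push_cast <;> ring
  have := Complex.ofReal_inj.mp this
  rwa [Real.Gamma_one_half_eq] at this

lemma BI_pos {u : ℝ} (hu : 0 < u) : 0 < BI u := by
  refine intervalIntegral_pos_of_pos_on (BI_integrable hu) (fun x hx => ?_) one_pos
  have h1 : 0 < x ^ (u-1) := Real.rpow_pos_of_pos hx.1 _
  have h2 : 0 < (1-x) ^ (-(1/2):ℝ) := Real.rpow_pos_of_pos (by linarith [hx.2]) _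
  positivity

lemma sq_form (e l : ℝ) {x : ℝ} (hx : 0 < x) (hx1 : x ≤ 1) :
    x^(e+3/4-1)*(1-x)^(-(1/2):ℝ) - 2*l*(x^(e+1-1)*(1-x)^(-(1/2):ℝ))
      + l^2*(x^(e+5/4-1)*(1-x)^(-(1/2):ℝ))
    = (x^(e/2-1/8)*(1-x)^(-(1/4):ℝ) - l * (x^(e/2+1/8)*(1-x)^(-(1/4):ℝ)))^2 := by
  have hy : ((1-x)^(-(1/4):ℝ))*((1-x)^(-(1/4):ℝ)) = (1-x)^(-(1/2):ℝ) := by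
    rw [← Real.rpow_add' (by linarith : (0:ℝ) ≤ 1-x) (by norm_num : -(1/4) + -(1/4) ≠ (0:ℝ))]
    norm_num
  have hp2 : (x^(e/2-1/8)*(1-x)^(-(1/4):ℝ))^2 = x^(e+3/4-1)*(1-x)^(-(1/2):ℝ) := by
    rw [mul_pow, sq, sq, ← Real.rpow_add hx, hy,
      show e/2-1/8 + (e/2-1/8) = e+3/4-1 by ring]
  have hq2 : (x^(e/2+1/8)*(1-x)^(-(1/4):ℝ))^2 = x^(e+5/4-1)*(1-x)^(-(1/2):ℝ) := by
    rw [mul_pow, sq, sq, ← Real.rpow_add hx, hy,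
      show e/2+1/8 + (e/2+1/8) = e+5/4-1 by ring]
  have hpq : (x^(e/2-1/8)*(1-x)^(-(1/4):ℝ)) * (x^(e/2+1/8)*(1-x)^(-(1/4):ℝ))
      = x^(e+1-1)*(1-x)^(-(1/2):ℝ) := by
    rw [show (x^(e/2-1/8)*(1-x)^(-(1/4):ℝ)) * (x^(e/2+1/8)*(1-x)^(-(1/4):ℝ))
        = x^(e/2-1/8) * x^(e/2+1/8) * (((1-x)^(-(1/4):ℝ))*((1-x)^(-(1/4):ℝ))) by ring,
      ← Real.rpow_add hx, hy, show e/2-1/8 + (e/2+1/8) = e+1-1 by ring]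
  calc x^(e+3/4-1)*(1-x)^(-(1/2):ℝ) - 2*l*(x^(e+1-1)*(1-x)^(-(1/2):ℝ))
      + l^2*(x^(e+5/4-1)*(1-x)^(-(1/2):ℝ))
      = (x^(e/2-1/8)*(1-x)^(-(1/4):ℝ))^2
        - 2*l*((x^(e/2-1/8)*(1-x)^(-(1/4):ℝ)) * (x^(e/2+1/8)*(1-x)^(-(1/4):ℝ)))
        + l^2*(x^(e/2+1/8)*(1-x)^(-(1/4):ℝ))^2 := by rw [hp2, hq2, hpq]
    _ = _ := by ring

lemma BI_CS {e : ℝ} (he : 0 ≤ e) : BI (e+1) ^ 2 < BI (e+3/4) * BI (e+5/4) := by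
  have h1 : (0:ℝ) < e + 3/4 := by linarith
  have h2 : (0:ℝ) < e + 1 := by linarith
  have h3 : (0:ℝ) < e + 5/4 := by linarith
  have i1 := BI_integrable h1
  have i2 := BI_integrable h2
  have i3 := BI_integrable h3
  have hB3 := BI_pos h3
  set l : ℝ := BI (e+1) / BI (e+5/4) with hl_def
  have hl : 0 < l := div_pos (BI_pos h2) hB3
  set h : ℝ → ℝ := fun x => x^(e+3/4-1)*(1-x)^(-(1/2):ℝ)
      - 2*l*(x^(e+1-1)*(1-x)^(-(1/2):ℝ)) + l^2*(x^(e+5/4-1)*(1-x)^(-(1/2):ℝ)) with hh_def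
  have hih : IntervalIntegrable h volume 0 1 :=
    (i1.sub ((i2.const_mul (2*l)))).add (i3.const_mul (l^2))
  have hint : ∫ x in (0:ℝ)..1, h x = BI (e+3/4) - 2*l*BI (e+1) + l^2*BI (e+5/4) := by
    rw [hh_def]
    rw [intervalIntegral.integral_add (i1.sub (i2.const_mul (2*l))) (i3.const_mul (l^2)),
      intervalIntegral.integral_sub i1 (i2.const_mul (2*l)),
      intervalIntegral.integral_const_mul, intervalIntegral.integral_const_mul]
    rfl
  set s : ℝ := min (l ^ (-4:ℝ)) 1 with hs_def
  have hs0 : 0 < s := lt_min (Real.rpow_pos_of_pos hl _) one_pos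
  have hs1 : s ≤ 1 := min_le_right _ _
  have hsub1 : Set.uIcc (0:ℝ) s ⊆ Set.uIcc (0:ℝ) 1 := by
    rw [uIcc_of_le hs0.le, uIcc_of_le (by norm_num : (0:ℝ) ≤ 1)]
    exact Icc_subset_Icc le_rfl hs1
  have hsub2 : Set.uIcc s (1:ℝ) ⊆ Set.uIcc (0:ℝ) 1 := by
    rw [uIcc_of_le hs1, uIcc_of_le (by norm_num : (0:ℝ) ≤ 1)]
    exact Icc_subset_Icc hs0.le le_rfl
  have hpos : 0 < ∫ x in (0:ℝ)..s, h x := by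
    refine intervalIntegral_pos_of_pos_on (hih.mono_set hsub1) (fun x hx => ?_) hs0
    have hx0 : 0 < x := hx.1
    have hx1 : x ≤ 1 := le_trans hx.2.le hs1
    rw [hh_def]
    dsimp only
    rw [sq_form e l hx0 hx1]
    have hq : 0 < x^(e/2+1/8)*(1-x)^(-(1/4):ℝ) := by
      have : x < 1 := lt_of_lt_of_le hx.2 hs1
      have h1x : 0 < 1 - x := by linarith
      positivity
    have hxl : l < x ^ (-(1/4):ℝ) := by
      have hxs : x < l ^ (-4:ℝ) := lt_of_lt_of_le hx.2 (min_le_left _ _)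
      have := Real.rpow_lt_rpow_of_neg hx0 hxs (by norm_num : -(1/4:ℝ) < 0)
      calc l = (l ^ (-4:ℝ)) ^ (-(1/4):ℝ) := by
            rw [← Real.rpow_mul hl.le, show (-4:ℝ)*(-(1/4)) = (1:ℝ) by norm_num, Real.rpow_one]
          _ < x ^ (-(1/4):ℝ) := this
    have hdiff : 0 < x^(e/2-1/8)*(1-x)^(-(1/4):ℝ) - l * (x^(e/2+1/8)*(1-x)^(-(1/4):ℝ)) := by
      have hsplit : x^(e/2-1/8) = x^(-(1/4):ℝ) * x^(e/2+1/8) := by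
        rw [← Real.rpow_add hx0, show -(1/4) + (e/2+1/8) = e/2-1/8 by ring]
      rw [hsplit]
      have := mul_lt_mul_of_pos_right hxl hq
      nlinarith [hq, hxl]
    positivity
  have hnonneg : 0 ≤ ∫ x in s..(1:ℝ), h x := by
    refine intervalIntegral.integral_nonneg hs1 (fun x hx => ?_)
    have hx0 : 0 < x := lt_of_lt_of_le hs0 hx.1
    rw [hh_def]; dsimp only
    rw [sq_form e l hx0 hx.2]
    exact sq_nonneg _
  have hsplit := intervalIntegral.integral_add_adjacent_intervals
    (hih.mono_set hsub1) (hih.mono_set hsub2)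
  have hQ : 0 < BI (e+3/4) - 2*l*BI (e+1) + l^2*BI (e+5/4) := by
    rw [← hint, ← hsplit]; linarith
  have hlB : l * BI (e+5/4) = BI (e+1) := div_mul_cancel₀ _ hB3.ne'
  have hmul := mul_pos hQ hB3
  have h4 : (BI (e+3/4) - 2*l*BI (e+1) + l^2*BI (e+5/4)) * BI (e+5/4)
      = BI (e+3/4)*BI (e+5/4) - BI (e+1)^2 := by
    rw [← hlB]; ring
  linarith [hmul, h4.symm ▸ hmul]

theorem ball_sphere_volume_ratio (D : ℕ) (hD : 1 ≤ D) :
    (Real.pi ^ ((D : ℝ) / 2) / Real.Gamma ((D : ℝ) / 2 + 1)) /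
      (2 * Real.pi ^ (((D : ℝ) + 1) / 2) / Real.Gamma (((D : ℝ) + 1) / 2)) <
      1 / Real.sqrt (Real.pi * (2 * (D : ℝ) + 1)) := by
  have hD1 : (1:ℝ) ≤ (D:ℝ) := by exact_mod_cast hD
  set a : ℝ := ((D:ℝ)+1)/2 with ha_def
  clear_value a
  have ha1 : 1 ≤ a := by rw [ha_def]; linarith
  have ha0 : 0 < a := by linarith
  have hc : 0 < a - 1/4 := by linarith
  have hG1 : 0 < Real.Gamma a := Real.Gamma_pos_of_pos ha0
  have hG2 : 0 < Real.Gamma (a+1/2) := Real.Gamma_pos_of_pos (by linarith)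
  have hG3 : 0 < Real.Gamma (a-1/4) := Real.Gamma_pos_of_pos (by linarith)
  have hG4 : 0 < Real.Gamma (a+1/4) := Real.Gamma_pos_of_pos (by linarith)
  have hs2 : Real.sqrt π * Real.sqrt π = π := Real.mul_self_sqrt Real.pi_pos.le
  have hsπ : 0 < Real.sqrt π := Real.sqrt_pos.mpr Real.pi_pos
  have hBa := BI_eq ha0
  have hB1 := BI_eq (u := a-1/4) (by linarith)
  have hB2 := BI_eq (u := a+1/4) (by linarith)
  rw [show a-1/4+1/2 = a+1/4 by ring] at hB1
  rw [show a+1/4+1/2 = a+3/4 by ring] at hB2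
  have hrec : Real.Gamma (a+3/4) = (a-1/4) * Real.Gamma (a-1/4) := by
    rw [show a+3/4 = (a-1/4)+1 by ring, Real.Gamma_add_one hc.ne']
  have key : (Real.Gamma (a-1/4) * Real.sqrt π) * (Real.Gamma (a+1/4) * Real.sqrt π)
      = (Real.Gamma (a+1/4) * BI (a-1/4)) * (Real.Gamma (a+3/4) * BI (a+1/4)) := by
    rw [hB1, hB2]
  have h2 : (Real.Gamma (a-1/4) * Real.Gamma (a+1/4)) * π
      = (Real.Gamma (a-1/4) * Real.Gamma (a+1/4)) * ((a-1/4) * (BI (a-1/4) * BI (a+1/4))) := by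
    linear_combination key - Real.Gamma (a-1/4)*Real.Gamma (a+1/4)*hs2
      + Real.Gamma (a+1/4)*BI (a-1/4)*BI (a+1/4)*hrec
  have hprod : π / (a-1/4) = BI (a-1/4) * BI (a+1/4) := by
    have h3 := mul_left_cancel₀ (mul_pos hG3 hG4).ne' h2
    rw [h3, mul_div_cancel_left₀ _ hc.ne']
  have hcs : BI a ^ 2 < BI (a-1/4) * BI (a+1/4) := by
    have h := BI_CS (e := a-1) (by linarith)
    rw [show a-1+1 = a by ring, show a-1+3/4 = a-1/4 by ring,
      show a-1+5/4 = a+1/4 by ring] at h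
    exact h
  have hBa2 : BI a ^ 2 < π / (a-1/4) := by rw [hprod]; exact hcs
  have hBapos := BI_pos ha0
  have hsqrt : BI a < Real.sqrt (π / (a-1/4)) := by
    have h := Real.sqrt_lt_sqrt (sq_nonneg (BI a)) hBa2
    rwa [Real.sqrt_sq hBapos.le] at h
  have hspos : 0 < Real.sqrt (π*(a-1/4)) := Real.sqrt_pos.mpr (by positivity)
  have hkey : BI a * Real.sqrt (π*(a-1/4)) < π := by
    calc BI a * Real.sqrt (π*(a-1/4))
        < Real.sqrt (π/(a-1/4)) * Real.sqrt (π*(a-1/4)) :=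
          mul_lt_mul_of_pos_right hsqrt hspos
      _ = Real.sqrt ((π/(a-1/4)) * (π*(a-1/4))) := (Real.sqrt_mul (by positivity) _).symm
      _ = Real.sqrt (π^2) := by
          rw [show (π/(a-1/4)) * (π*(a-1/4)) = π^2 by
            rw [div_mul_eq_mul_div, show π*(π*(a-1/4)) = π^2*(a-1/4) by ring,
              mul_div_assoc, div_self hc.ne', mul_one]]
      _ = π := by rw [Real.sqrt_sq Real.pi_pos.le]
  have hfinal : Real.Gamma a * Real.sqrt (π*(a-1/4)) < Real.sqrt π * Real.Gamma (a+1/2) := by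
    have h2' : (Real.Gamma a * Real.sqrt π) * Real.sqrt (π*(a-1/4)) < π * Real.Gamma (a+1/2) := by
      calc (Real.Gamma a * Real.sqrt π) * Real.sqrt (π*(a-1/4))
          = BI a * Real.sqrt (π*(a-1/4)) * Real.Gamma (a+1/2) := by rw [hBa]; ring
        _ < π * Real.Gamma (a+1/2) := by
            exact (mul_lt_mul_of_pos_right hkey hG2)
    refine lt_of_mul_lt_mul_right ?_ hsπ.le
    calc Real.Gamma a * Real.sqrt (π*(a-1/4)) * Real.sqrt π
        = (Real.Gamma a * Real.sqrt π) * Real.sqrt (π*(a-1/4)) := by ring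
      _ < π * Real.Gamma (a+1/2) := h2'
      _ = Real.sqrt π * Real.Gamma (a+1/2) * Real.sqrt π := by
          rw [show Real.sqrt π * Real.Gamma (a+1/2) * Real.sqrt π
            = (Real.sqrt π * Real.sqrt π) * Real.Gamma (a+1/2) by ring, hs2]
  -- rewrite the goal
  have hsq : Real.sqrt (π * (2*(D:ℝ)+1)) = 2 * Real.sqrt (π*(a-1/4)) := by
    rw [show π * (2*(D:ℝ)+1) = 2^2 * (π*(a-1/4)) by rw [ha_def]; ring,
      Real.sqrt_mul (by positivity), Real.sqrt_sq (by norm_num)]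
  have hpow : π ^ a = π ^ ((D:ℝ)/2) * Real.sqrt π := by
    rw [show a = (D:ℝ)/2 + 1/2 by rw [ha_def]; ring, Real.rpow_add Real.pi_pos,
      ← Real.sqrt_eq_rpow]
  have hpd : 0 < π ^ ((D:ℝ)/2) := Real.rpow_pos_of_pos Real.pi_pos _
  rw [show (D:ℝ)/2 + 1 = a + 1/2 by rw [ha_def]; ring, hpow, hsq]
  rw [div_lt_div_iff₀ (by positivity) (by positivity)]
  calc π ^ ((D:ℝ)/2) / Real.Gamma (a+1/2) * (2 * Real.sqrt (π*(a-1/4)))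
      = (2*π^((D:ℝ)/2)/(Real.Gamma a * Real.Gamma (a+1/2)))
          * (Real.Gamma a * Real.sqrt (π*(a-1/4))) := by
        field_simp
    _ < (2*π^((D:ℝ)/2)/(Real.Gamma a * Real.Gamma (a+1/2)))
          * (Real.sqrt π * Real.Gamma (a+1/2)) := by
        exact mul_lt_mul_of_pos_left hfinal (by positivity)
    _ = 1 * (2 * (π ^ ((D:ℝ)/2) * Real.sqrt π) / Real.Gamma a) := by
        field_simp
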